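/- For the ODE V' = -k₁ V^(1-1/μ) - k₂ V^(1+1/μ) with V(0) = V₀ > 0, the substitution W = V^(1/μ) yields the exact settling time T = (μ/√(k₁k₂)) · arctan(√(k₂/k₁) · V₀^(1/μ)). -/

import Mathlib

/-- Exact settling time of `V' = -k₁ V^(1-1/μ) - k₂ V^(1+1/μ)`, `V(0) = V₀ > 0`:
`T = (μ/√(k₁k₂)) · arctan(√(k₂/k₁) · V₀^(1/μ))`. -/
theorem stmt_1 (k₁ k₂ μ V₀ T : ℝ) (hk₁ : 0 < k₁) (hk₂ : 0 < k₂) (hμ : 1 < μ)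
    (hT : 0 ≤ T) (V : ℝ → ℝ) (hV₀ : V 0 = V₀) (hV₀pos : 0 < V₀)
    (hpos : ∀ t ∈ Set.Ico (0:ℝ) T, 0 < V t)
    (hODE : ∀ t ∈ Set.Ico (0:ℝ) T,
      HasDerivAt V (-k₁ * V t ^ (1 - 1/μ) - k₂ * V t ^ (1 + 1/μ)) t)
    (hcont : ContinuousOn V (Set.Icc 0 T))
    (hVT : V T = 0) :
    T = μ / Real.sqrt (k₁ * k₂) * Real.arctan (Real.sqrt (k₂ / k₁) * V₀ ^ (1/μ)) := by
  have hμ0 : (0:ℝ) < μ := by linarith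
  set a := Real.sqrt k₁ with ha_def
  set b := Real.sqrt k₂ with hb_def
  have ha : 0 < a := Real.sqrt_pos.mpr hk₁
  have hb : 0 < b := Real.sqrt_pos.mpr hk₂
  have ha2 : a ^ 2 = k₁ := Real.sq_sqrt hk₁.le
  have hb2 : b ^ 2 = k₂ := Real.sq_sqrt hk₂.le
  have hcab : Real.sqrt (k₂ / k₁) = b / a := Real.sqrt_div hk₂.le k₁
  have hab : Real.sqrt (k₁ * k₂) = a * b := Real.sqrt_mul hk₁.le k₂
  set c : ℝ := b / a with hc_def
  have hc : 0 < c := div_pos hb ha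
  set A : ℝ := μ / (a * b) with hA_def
  set f : ℝ → ℝ := fun s => A * Real.arctan (c * V s ^ (1/μ)) with hf_def
  set g : ℝ → ℝ := fun s => A * Real.arctan (c * V₀ ^ (1/μ)) - s with hg_def
  -- derivative of f is -1 on Ico 0 T
  have hderivf : ∀ t ∈ Set.Ico (0:ℝ) T, HasDerivAt f (-1) t := by
    intro t ht
    have hx : 0 < V t := hpos t ht
    have h1 := hODE t ht
    have h2 : HasDerivAt (fun y : ℝ => y ^ (1/μ)) ((1/μ) * V t ^ (1/μ - 1)) (V t) := by
      simpa [mul_comm] using Real.hasDerivAt_rpow_const (x := V t) (p := 1/μ) (Or.inl hx.ne')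
    have h3 : HasDerivAt (fun s => V s ^ (1/μ))
        ((1/μ) * V t ^ (1/μ - 1) * (-k₁ * V t ^ (1 - 1/μ) - k₂ * V t ^ (1 + 1/μ))) t :=
      h2.comp t h1
    have h4 := h3.const_mul c
    have h5 := ((Real.hasDerivAt_arctan (c * V t ^ (1/μ))).comp t h4).const_mul A
    refine h5.congr_deriv ?_
    -- algebra
    have e1 : V t ^ (1/μ - 1) * V t ^ (1 - 1/μ) = 1 := by
      rw [← Real.rpow_add hx]; norm_num
    have e2 : V t ^ (1/μ - 1) * V t ^ (1 + 1/μ) = V t ^ (1/μ) * V t ^ (1/μ) := by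
      rw [← Real.rpow_add hx, ← Real.rpow_add hx]; ring_nf
    have hden : 0 < 1 + (c * V t ^ (1/μ)) ^ 2 := by positivity
    have e3 : 1/μ * V t ^ (1/μ - 1) * (-k₁ * V t ^ (1 - 1/μ) - k₂ * V t ^ (1 + 1/μ))
        = 1/μ * (-k₁ - k₂ * (V t ^ (1/μ) * V t ^ (1/μ))) := by
      calc 1/μ * V t ^ (1/μ - 1) * (-k₁ * V t ^ (1 - 1/μ) - k₂ * V t ^ (1 + 1/μ))
          = 1/μ * (-k₁ * (V t ^ (1/μ - 1) * V t ^ (1 - 1/μ))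
            - k₂ * (V t ^ (1/μ - 1) * V t ^ (1 + 1/μ))) := by ring
        _ = _ := by rw [e1, e2]; ring
    rw [e3, hc_def, hA_def, ← ha2, ← hb2]
    have hne : (1 + (b / a * V t ^ (1 / μ)) ^ 2) ≠ 0 := by positivity
    field_simp
    ring
  have hderivg : ∀ t ∈ Set.Ico (0:ℝ) T, HasDerivAt g (-1) t := by
    intro t _
    exact HasDerivAt.const_sub _ (hasDerivAt_id t)
  -- continuity
  have hfc : ContinuousOn f (Set.Icc 0 T) := by
    apply ContinuousOn.mul continuousOn_const
    exact Real.continuous_arctan.comp_continuousOn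
      (ContinuousOn.mul continuousOn_const
        (hcont.rpow_const fun x _ => Or.inr (by positivity)))
  have hgc : ContinuousOn g (Set.Icc 0 T) :=
    continuousOn_const.sub continuousOn_id
  have hi : f 0 = g 0 := by simp [hf_def, hg_def, hV₀]
  have hfg := eq_of_has_deriv_right_eq
    (f' := fun _ => (-1 : ℝ))
    (fun t ht => (hderivf t ht).hasDerivWithinAt)
    (fun t ht => (hderivg t ht).hasDerivWithinAt)
    hfc hgc hi T (Set.right_mem_Icc.mpr hT)
  have hzero : (0:ℝ) ^ (1/μ) = 0 := Real.zero_rpow (by positivity)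
  rw [hf_def, hg_def] at hfg
  simp only [hVT, hzero, mul_zero, Real.arctan_zero] at hfg
  rw [hab, hcab]
  linarith [hfg]
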